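/- Let k be an algebraically closed field and A a Z-graded commutative domain over k such that A_i ≠ 0 and A_{-j} ≠ 0 for some positive integers i, j, and A_k is nonzero and finite-dimensional over k for some integer k. Then A is isomorphic as a graded algebra to the Laurent polynomial ring k[s^{±1}] for some nonzero homogeneous element s of A of positive degree. -/

import Mathlib

section Aux

variable {k A : Type*} [Field k] [CommRing A] [IsDomain A]
    [Algebra k A] (𝒜 : ℤ → Submodule k A) [GradedAlgebra 𝒜]

omit [IsDomain A] [GradedAlgebra 𝒜] in
private lemma mem_deg_congr {p q : ℤ} (h : p = q) {a : A} (ha : a ∈ 𝒜 p) : a ∈ 𝒜 q := h ▸ ha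

/-- The grade-zero subalgebra. -/
private def G0 : Subalgebra k A where
  carrier := 𝒜 0
  mul_mem' := fun ha hb => mem_deg_congr 𝒜 (zero_add 0) (SetLike.mul_mem_graded ha hb)
  one_mem' := SetLike.one_mem_graded 𝒜
  add_mem' := fun ha hb => (𝒜 0).add_mem ha hb
  zero_mem' := (𝒜 0).zero_mem
  algebraMap_mem' := fun c => by
    rw [Algebra.algebraMap_eq_smul_one]
    exact Submodule.smul_mem _ _ (SetLike.one_mem_graded 𝒜)

private lemma grade_zero_eq [IsAlgClosed k]
    (hfin : ∃ n : ℤ, 𝒜 n ≠ ⊥ ∧ Module.Finite k (𝒜 n)) :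
    ∀ z ∈ 𝒜 0, ∃ c : k, z = c • (1 : A) := by
  obtain ⟨n, hn, hfinn⟩ := hfin
  obtain ⟨t, htm, ht0⟩ := (Submodule.ne_bot_iff _).1 hn
  have hfin0 : Module.Finite k (G0 (k := k) 𝒜) := by
    let f : (G0 (k := k) 𝒜) →ₗ[k] (𝒜 n) :=
      { toFun := fun z => ⟨t * z, mem_deg_congr 𝒜 (add_zero n) (SetLike.mul_mem_graded htm z.2)⟩
        map_add' := fun z w => by ext; simp [mul_add]
        map_smul' := fun c z => by ext; simp [Algebra.mul_smul_comm] }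
    have hinj : Function.Injective f := by
      intro z w hzw
      have h : t * (z : A) = t * (w : A) := congrArg Subtype.val hzw
      exact Subtype.ext (mul_left_cancel₀ ht0 h)
    exact Module.Finite.of_injective f hinj
  have : Algebra.IsIntegral k (G0 (k := k) 𝒜) := Algebra.IsIntegral.of_finite k _
  intro z hz
  obtain ⟨c, hc⟩ := (IsAlgClosed.algebraMap_bijective_of_isIntegral
      (k := k) (K := G0 (k := k) 𝒜)).2 ⟨z, hz⟩
  refine ⟨c, ?_⟩
  have h := congrArg Subtype.val hc
  simpa [Algebra.algebraMap_eq_smul_one] using h.symm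

end Aux

theorem stmt0 (k A : Type*) [Field k] [IsAlgClosed k] [CommRing A] [IsDomain A]
    [Algebra k A] (𝒜 : ℤ → Submodule k A) [GradedAlgebra 𝒜]
    (hpos : ∃ i : ℤ, 0 < i ∧ 𝒜 i ≠ ⊥) (hneg : ∃ j : ℤ, 0 < j ∧ 𝒜 (-j) ≠ ⊥)
    (hfin : ∃ n : ℤ, 𝒜 n ≠ ⊥ ∧ Module.Finite k (𝒜 n)) :
    ∃ (d : ℤ) (u : Aˣ), 0 < d ∧ (u : A) ∈ 𝒜 d ∧
      ∀ (n : ℤ) (a : A), a ∈ 𝒜 n → a ≠ 0 →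
        ∃ (m : ℤ) (c : k), n = d * m ∧ a = c • ((u ^ m : Aˣ) : A) := by
  obtain ⟨i, hi, hAi⟩ := hpos
  obtain ⟨j, hj, hAj⟩ := hneg
  obtain ⟨x, hxm, hx0⟩ := (Submodule.ne_bot_iff _).1 hAi
  obtain ⟨y, hym, hy0⟩ := (Submodule.ne_bot_iff _).1 hAj
  have hz := grade_zero_eq 𝒜 hfin
  set I := i.toNat with hIdef
  set J := j.toNat with hJdef
  have hI : (I : ℤ) = i := Int.toNat_of_nonneg hi.le
  have hJ : (J : ℤ) = j := Int.toNat_of_nonneg hj.le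
  have hI1 : 1 ≤ I := by omega
  have hJ1 : 1 ≤ J := by omega
  -- the element x^J * y^I has degree zero
  have hz0m : x ^ J * y ^ I ∈ 𝒜 0 :=
    mem_deg_congr 𝒜 (by rw [nsmul_eq_mul, nsmul_eq_mul, hI, hJ]; ring)
      (SetLike.mul_mem_graded (SetLike.pow_mem_graded J hxm) (SetLike.pow_mem_graded I hym))
  obtain ⟨c, hc⟩ := hz _ hz0m
  have hzne : x ^ J * y ^ I ≠ 0 := mul_ne_zero (pow_ne_zero _ hx0) (pow_ne_zero _ hy0)
  have hcne : c ≠ 0 := by rintro rfl; rw [zero_smul] at hc; exact hzne hc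
  -- x' is a homogeneous inverse of x, of degree -i
  set x' : A := c⁻¹ • (x ^ (J - 1) * y ^ I) with hx'def
  have hx'm : x' ∈ 𝒜 (-i) :=
    Submodule.smul_mem _ _ (mem_deg_congr 𝒜
      (by rw [nsmul_eq_mul, nsmul_eq_mul]
          have : ((J - 1 : ℕ) : ℤ) = j - 1 := by omega
          rw [this, hI]; ring)
      (SetLike.mul_mem_graded (SetLike.pow_mem_graded (J - 1) hxm)
        (SetLike.pow_mem_graded I hym)))
  have hxx' : x * x' = 1 := by
    have h1 : x * (x ^ (J - 1) * y ^ I) = x ^ J * y ^ I := by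
      rw [← mul_assoc, ← pow_succ']
      congr 2
      omega
    rw [hx'def, mul_smul_comm, h1, hc, smul_smul, inv_mul_cancel₀ hcne, one_smul]
  have hx'0 : x' ≠ 0 := right_ne_zero_of_mul_eq_one hxx'
  -- every nonzero homogeneous element has a homogeneous inverse
  have key : ∀ (m : ℤ) (a : A), a ∈ 𝒜 m → a ≠ 0 → ∃ b ∈ 𝒜 (-m), a * b = 1 := by
    intro m a ham ha0
    obtain ⟨w, hwm, hw0⟩ : ∃ w ∈ 𝒜 (-(m * i)), w ≠ 0 := by
      rcases le_or_gt 0 m with hm | hm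
      · refine ⟨x' ^ m.toNat, mem_deg_congr 𝒜 ?_ (SetLike.pow_mem_graded _ hx'm),
          pow_ne_zero _ hx'0⟩
        rw [nsmul_eq_mul, Int.toNat_of_nonneg hm]; ring
      · refine ⟨x ^ (-m).toNat, mem_deg_congr 𝒜 ?_ (SetLike.pow_mem_graded _ hxm),
          pow_ne_zero _ hx0⟩
        have h1 : ((-m).toNat : ℤ) = -m := Int.toNat_of_nonneg (by omega)
        rw [nsmul_eq_mul, h1]; ring
    have haI : a ^ I * w ∈ 𝒜 0 :=
      mem_deg_congr 𝒜 (by rw [nsmul_eq_mul, hI]; ring)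
        (SetLike.mul_mem_graded (SetLike.pow_mem_graded I ham) hwm)
    obtain ⟨c', hc'⟩ := hz _ haI
    have ha' : a ^ I * w ≠ 0 := mul_ne_zero (pow_ne_zero _ ha0) hw0
    have hc'0 : c' ≠ 0 := by rintro rfl; rw [zero_smul] at hc'; exact ha' hc'
    refine ⟨c'⁻¹ • (a ^ (I - 1) * w), Submodule.smul_mem _ _ (mem_deg_congr 𝒜
      (by rw [nsmul_eq_mul]
          have h2 : ((I - 1 : ℕ) : ℤ) = i - 1 := by omega
          rw [h2]; ring)
      (SetLike.mul_mem_graded (SetLike.pow_mem_graded (I - 1) ham) hwm)), ?_⟩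
    have h1 : a * (a ^ (I - 1) * w) = a ^ I * w := by
      rw [← mul_assoc, ← pow_succ']
      congr 2
      omega
    rw [mul_smul_comm, h1, hc', smul_smul, inv_mul_cancel₀ hc'0, one_smul]
  -- the support is a subgroup of ℤ
  set S : AddSubgroup ℤ :=
    { carrier := {m | ∃ a ∈ 𝒜 m, a ≠ 0}
      zero_mem' := ⟨1, SetLike.one_mem_graded 𝒜, one_ne_zero⟩
      add_mem' := fun ⟨a, ham, ha⟩ ⟨b, hbm, hb⟩ =>
        ⟨a * b, SetLike.mul_mem_graded ham hbm, mul_ne_zero ha hb⟩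
      neg_mem' := fun ⟨a, ham, ha⟩ =>
        let ⟨b, hbm, hab⟩ := key _ _ ham ha
        ⟨b, hbm, right_ne_zero_of_mul_eq_one hab⟩ } with hSdef
  obtain ⟨g, hgS⟩ := Int.subgroup_cyclic S
  have hmemS : ∀ m : ℤ, m ∈ S ↔ ∃ n : ℤ, n • g = m := fun m => by
    rw [hgS]; exact AddSubgroup.mem_closure_singleton
  have hiS : i ∈ S := ⟨x, hxm, hx0⟩
  have hg0 : g ≠ 0 := by
    rintro rfl
    obtain ⟨nn, hnn⟩ := (hmemS i).1 hiS
    rw [smul_zero] at hnn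
    omega
  set d : ℤ := (g.natAbs : ℤ) with hddef
  have hd0 : 0 < d := by
    have := Int.natAbs_pos.2 hg0
    omega
  have hgSmem : g ∈ S := (hmemS g).2 ⟨1, one_smul _ _⟩
  have hdS : d ∈ S := by
    rcases Int.natAbs_eq g with h | h
    · rw [hddef, ← h]; exact hgSmem
    · have : d = -g := by omega
      rw [this]; exact S.neg_mem hgSmem
  obtain ⟨u₀, hu₀m, hu₀0⟩ := hdS
  obtain ⟨w, hwm, huw⟩ := key _ _ hu₀m hu₀0
  set u : Aˣ := Units.mk u₀ w huw (by rw [mul_comm]; exact huw) with hudef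
  have huval : (u : A) = u₀ := rfl
  have huinv : ((u⁻¹ : Aˣ) : A) = w := rfl
  have hzpow : ∀ m : ℤ, ((u ^ m : Aˣ) : A) ∈ 𝒜 (d * m) := by
    intro m
    cases m with
    | ofNat m' =>
      rw [Int.ofNat_eq_coe, zpow_natCast, Units.val_pow_eq_pow_val, huval]
      exact mem_deg_congr 𝒜 (by rw [nsmul_eq_mul]; ring) (SetLike.pow_mem_graded _ hu₀m)
    | negSucc m' =>
      rw [zpow_negSucc, ← inv_pow, Units.val_pow_eq_pow_val, huinv]
      exact mem_deg_congr 𝒜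
        (by rw [nsmul_eq_mul, Int.negSucc_eq]; push_cast; ring)
        (SetLike.pow_mem_graded _ hwm)
  refine ⟨d, u, hd0, hu₀m, ?_⟩
  intro n a ham ha0
  obtain ⟨m, hm⟩ := (hmemS n).1 ⟨a, ham, ha0⟩
  have hex : ∃ m' : ℤ, n = d * m' := by
    rcases Int.natAbs_eq g with h | h
    · exact ⟨m, by rw [← hm, smul_eq_mul, hddef, ← h]; ring⟩
    · exact ⟨-m, by rw [← hm, smul_eq_mul]; have : g = -d := by omega
                    rw [this]; ring⟩
  obtain ⟨m', hnm⟩ := hex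
  have hb : a * ((u ^ (-m') : Aˣ) : A) ∈ 𝒜 0 :=
    mem_deg_congr 𝒜 (by rw [hnm]; ring) (SetLike.mul_mem_graded ham (hzpow (-m')))
  obtain ⟨c₀, hc₀⟩ := hz _ hb
  refine ⟨m', c₀, hnm, ?_⟩
  have hsplit : a = (a * ((u ^ (-m') : Aˣ) : A)) * ((u ^ m' : Aˣ) : A) := by
    rw [mul_assoc, ← Units.val_mul, ← zpow_add]
    norm_num
  rw [hsplit, hc₀, smul_mul_assoc, one_mul]
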